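/- Let (X,d) be a Lawvere metric space and define d^∧ : X × X → [0,∞] by d^∧(x,y) = inf over all n ≥ 0 and all finite sequences x = x_0, x_1, …, x_{n+2} = y in X of Σ_{i=0}^{n} ( d(x_{i+1},x_i) + d(x_{i+1},x_{i+2}) ). Then: (a) d^∧ is symmetric: d^∧(x,y) = d^∧(y,x) for all x, y; (b) d^∧(x,y) ≤ d(x,y) for all x, y; (c) d^∧ is universal: for every pseudometric space (Y,ρ) and every map g : X → Y with ρ(g(x),g(y)) ≤ d(x,y) for all x, y ∈ X, one has ρ(g(x),g(y)) ≤ d^∧(x,y) for all x, y ∈ X. -/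

import Mathlib

open scoped ENNReal

/-- The symmetrization `d^∧` of a Lawvere metric `d` : the infimum over all
`n ≥ 0` and all finite sequences `x = x₀, x₁, …, x_{n+2} = y` of
`Σ_{i=0}^{n} ( d(x_{i+1}, x_i) + d(x_{i+1}, x_{i+2}) )`. -/
noncomputable def dWedge {X : Type*} (d : X → X → ℝ≥0∞) (x y : X) : ℝ≥0∞ :=
  ⨅ (n : ℕ) (c : ℕ → X) (_ : c 0 = x) (_ : c (n + 2) = y),
    ∑ i ∈ Finset.range (n + 1), (d (c (i + 1)) (c i) + d (c (i + 1)) (c (i + 2)))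

lemma dWedge_le_sum {X : Type*} (d : X → X → ℝ≥0∞) (n : ℕ) (c : ℕ → X) (x y : X)
    (h0 : c 0 = x) (h2 : c (n + 2) = y) :
    dWedge d x y ≤ ∑ i ∈ Finset.range (n + 1), (d (c (i + 1)) (c i) + d (c (i + 1)) (c (i + 2))) := by
  exact iInf_le_of_le n (iInf_le_of_le c (iInf_le_of_le h0 (iInf_le _ h2)))

lemma chain_le {Y : Type*} (ρ : Y → Y → ℝ≥0∞) (h0 : ∀ a, ρ a a = 0)
    (htri : ∀ a b c, ρ a c ≤ ρ a b + ρ b c) (f : ℕ → Y) :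
    ∀ m, ρ (f 0) (f m) ≤ ∑ k ∈ Finset.range m, ρ (f k) (f (k + 1)) := by
  intro m
  induction m with
  | zero => simp [h0]
  | succ m ih =>
      rw [Finset.sum_range_succ]
      exact le_trans (htri _ (f m) _) (add_le_add ih le_rfl)

theorem stmt10 {X : Type*} (d : X → X → ℝ≥0∞)
    (hd0 : ∀ x, d x x = 0) (hdtri : ∀ x y z, d x y ≤ d x z + d z y) :
    (∀ x y, dWedge d x y = dWedge d y x) ∧
    (∀ x y, dWedge d x y ≤ d x y) ∧
    (∀ (Y : Type*) (ρ : Y → Y → ℝ≥0∞),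
      (∀ a, ρ a a = 0) → (∀ a b, ρ a b = ρ b a) → (∀ a b c, ρ a c ≤ ρ a b + ρ b c) →
      ∀ g : X → Y, (∀ x y, ρ (g x) (g y) ≤ d x y) →
        ∀ x y, ρ (g x) (g y) ≤ dWedge d x y) := by
  have hsymm : ∀ x y, dWedge d x y ≤ dWedge d y x := by
    intro x y
    conv_rhs => rw [dWedge]
    simp only [le_iInf_iff]
    intro n c h0 h2
    have key := dWedge_le_sum d n (fun i => c (n + 2 - i)) x y (by simp [h2]) (by simp [h0])
    refine key.trans_eq ?_
    rw [← Finset.sum_range_reflect]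
    refine Finset.sum_congr rfl (fun i hi => ?_)
    have hi' : i ≤ n := Nat.lt_succ_iff.mp (Finset.mem_range.mp hi)
    have e0 : n + 1 - 1 - i = n - i := by omega
    have e1 : n + 2 - (n - i + 1) = i + 1 := by omega
    have e2 : n + 2 - (n - i) = i + 2 := by omega
    have e3 : n + 2 - (n - i + 2) = i := by omega
    simp only [e0, e1, e2, e3]
    exact add_comm _ _
  refine ⟨fun x y => le_antisymm (hsymm x y) (hsymm y x), ?_, ?_⟩
  · intro x y
    have key := dWedge_le_sum d 0 (fun i => if i ≤ 1 then x else y) x y (by simp) (by simp)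
    simpa [hd0] using key
  · intro Y ρ hρ0 hρs hρtri g hg x y
    rw [dWedge]
    simp only [le_iInf_iff]
    intro n c h0 h2
    subst h0 h2
    calc ρ (g (c 0)) (g (c (n + 2)))
        ≤ ∑ k ∈ Finset.range (n + 2), ρ (g (c k)) (g (c (k + 1))) :=
          chain_le ρ hρ0 hρtri (fun k => g (c k)) (n + 2)
      _ = ∑ k ∈ Finset.range (n + 1), ρ (g (c k)) (g (c (k + 1)))
            + ρ (g (c (n + 1))) (g (c (n + 2))) := Finset.sum_range_succ _ _
      _ ≤ ∑ i ∈ Finset.range (n + 1), d (c (i + 1)) (c i)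
            + ∑ i ∈ Finset.range (n + 1), d (c (i + 1)) (c (i + 2)) := by
          refine add_le_add (Finset.sum_le_sum fun i _ => ?_) ?_
          · rw [hρs]; exact hg _ _
          · refine le_trans (hg _ _) ?_
            exact Finset.single_le_sum (f := fun i => d (c (i + 1)) (c (i + 2)))
              (fun i _ => zero_le) (Finset.self_mem_range_succ n)
      _ = ∑ i ∈ Finset.range (n + 1), (d (c (i + 1)) (c i) + d (c (i + 1)) (c (i + 2))) :=
          (Finset.sum_add_distrib).symm
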